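/- arXiv:1702.03680 — 2 statements merged into one kernel-verified Lean document; each statement's English description precedes it below -/
import Mathlib

section
/- The Euler integral of the two-centre problem with centres at 0 and x' is conserved: let x' ∈ ℝ³ \ {0} be fixed, m > 0, ε ∈ ℝ, and let x, y : ℝ → ℝ³ be differentiable with x(t) ∉ {0, x'} for all t, satisfying ẋ(t) = y(t)/m and ẏ(t) = −x(t)/|x(t)|³ + ε·(x' − x(t))/|x' − x(t)|³. Then the function t ↦ 𝒢₀(t) + ε·𝒢₁(t) is constant, where 𝒢₀(t) = |x(t) × y(t)|² − x' · ( y(t) × (x(t) × y(t)) − m·x(t)/|x(t)| ) and 𝒢₁(t) = m·( (x' − x(t)) · x' )/|x' − x(t)|. -/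
open scoped Matrix

/-- Euclidean norm on `Fin 3 → ℝ`. -/
noncomputable def norm3 (v : Fin 3 → ℝ) : ℝ := Real.sqrt (v ⬝ᵥ v)

/-- The lowest-order Euler integral `𝒢₀ = |C|² − x'·L` where `C = x × y` is the angular
momentum and `L = y × C − m x/|x|` is the Laplace (eccentricity) vector. -/
noncomputable def G0 (x' : Fin 3 → ℝ) (m : ℝ) (x y : Fin 3 → ℝ) : ℝ :=
  norm3 (x ⨯₃ y) ^ 2 - x' ⬝ᵥ (y ⨯₃ (x ⨯₃ y) - (m / norm3 x) • x)

/-- The first-order correction `𝒢₁ = m ((x' − x) · x')/|x' − x|`. -/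
noncomputable def G1 (x' : Fin 3 → ℝ) (m : ℝ) (x : Fin 3 → ℝ) : ℝ :=
  m * ((x' - x) ⬝ᵥ x') / norm3 (x' - x)

lemma dot_self_nonneg3 (v : Fin 3 → ℝ) : 0 ≤ v ⬝ᵥ v := by
  simp only [dotProduct, Fin.sum_univ_three]
  nlinarith [sq_nonneg (v 0), sq_nonneg (v 1), sq_nonneg (v 2), sq_nonneg (v 0 + v 1)]

lemma norm3_sq (v : Fin 3 → ℝ) : norm3 v ^ 2 = v ⬝ᵥ v := Real.sq_sqrt (dot_self_nonneg3 v)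

lemma norm3_pos {v : Fin 3 → ℝ} (hv : v ≠ 0) : 0 < norm3 v := by
  apply Real.sqrt_pos.2
  rcases (dot_self_nonneg3 v).lt_or_eq with h | h
  · exact h
  · exfalso; apply hv; funext i
    have h' := h.symm
    simp only [dotProduct, Fin.sum_univ_three] at h'
    have h0 : v 0 = 0 := by nlinarith [sq_nonneg (v 0), sq_nonneg (v 1), sq_nonneg (v 2)]
    have h1 : v 1 = 0 := by nlinarith [sq_nonneg (v 0), sq_nonneg (v 1), sq_nonneg (v 2)]
    have h2 : v 2 = 0 := by nlinarith [sq_nonneg (v 0), sq_nonneg (v 1), sq_nonneg (v 2)]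
    fin_cases i <;> simpa

lemma HasDerivAt.dot3 {f g : ℝ → Fin 3 → ℝ} {f' g' : Fin 3 → ℝ} {t : ℝ}
    (hf : HasDerivAt f f' t) (hg : HasDerivAt g g' t) :
    HasDerivAt (fun s => f s ⬝ᵥ g s) (f' ⬝ᵥ g t + f t ⬝ᵥ g') t := by
  have hf' := hasDerivAt_pi.1 hf
  have hg' := hasDerivAt_pi.1 hg
  have H := (((hf' 0).mul (hg' 0)).add ((hf' 1).mul (hg' 1))).add ((hf' 2).mul (hg' 2))
  simp only [dotProduct, Fin.sum_univ_three]
  refine H.congr_deriv ?_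
  ring

lemma HasDerivAt.cross3 {f g : ℝ → Fin 3 → ℝ} {f' g' : Fin 3 → ℝ} {t : ℝ}
    (hf : HasDerivAt f f' t) (hg : HasDerivAt g g' t) :
    HasDerivAt (fun s => f s ⨯₃ g s) (f' ⨯₃ g t + f t ⨯₃ g') t := by
  have hf' := hasDerivAt_pi.1 hf
  have hg' := hasDerivAt_pi.1 hg
  rw [hasDerivAt_pi]
  intro i
  fin_cases i <;>
    simp [cross_apply] <;>
  · apply HasDerivAt.congr_deriv (((hf' _).mul (hg' _)).sub ((hf' _).mul (hg' _)))
    ring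

lemma hasDerivAt_norm3 {f : ℝ → Fin 3 → ℝ} {f' : Fin 3 → ℝ} {t : ℝ}
    (hf : HasDerivAt f f' t) (h0 : f t ≠ 0) :
    HasDerivAt (fun s => norm3 (f s)) ((f' ⬝ᵥ f t) / norm3 (f t)) t := by
  have hq : HasDerivAt (fun s => f s ⬝ᵥ f s) (f' ⬝ᵥ f t + f t ⬝ᵥ f') t := hf.dot3 hf
  have hne : f t ⬝ᵥ f t ≠ 0 := by
    have h1 := norm3_pos h0
    have h2 := norm3_sq (f t)
    nlinarith
  have H := (Real.hasDerivAt_sqrt hne).comp t hq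
  refine H.congr_deriv ?_
  have hcomm : f t ⬝ᵥ f' = f' ⬝ᵥ f t := dotProduct_comm _ _
  simp only [norm3, hcomm]
  ring

lemma Gexp (x' : Fin 3 → ℝ) (m ε : ℝ) (v w : Fin 3 → ℝ) :
    G0 x' m v w + ε * G1 x' m v =
      (v ⨯₃ w) ⬝ᵥ (v ⨯₃ w) - x' ⬝ᵥ (w ⨯₃ (v ⨯₃ w)) + (m / norm3 v) * (x' ⬝ᵥ v)
        + ε * (m * ((x' - v) ⬝ᵥ x') / norm3 (x' - v)) := by
  simp [G0, G1, norm3_sq, dotProduct_sub, dotProduct_smul, smul_eq_mul]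
  ring

set_option maxHeartbeats 4000000 in
lemma euler_key (x' : Fin 3 → ℝ) (m ε : ℝ) (hm : m ≠ 0) (x y : ℝ → Fin 3 → ℝ) (t : ℝ)
    (hx0 : x t ≠ 0) (hx1 : x t ≠ x')
    (hx : HasDerivAt x (m⁻¹ • y t) t)
    (hy : HasDerivAt y (-((norm3 (x t) ^ 3)⁻¹ • x t)
        + (ε / norm3 (x' - x t) ^ 3) • (x' - x t)) t) :
    HasDerivAt (fun s => G0 x' m (x s) (y s) + ε * G1 x' m (x s)) 0 t := by
  set a := x t with ha
  set b := y t with hb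
  set b' := -((norm3 a ^ 3)⁻¹ • a) + (ε / norm3 (x' - a) ^ 3) • (x' - a) with hb'
  have hsub : HasDerivAt (fun s => x' - x s) (0 - m⁻¹ • b) t :=
    (hasDerivAt_const t x').sub hx
  have hx1' : x' - a ≠ 0 := fun h => hx1 ((sub_eq_zero.1 h).symm)
  have hn := norm3_pos hx0
  have hr := norm3_pos hx1'
  have hC := hx.cross3 hy
  have h1 := hC.dot3 hC
  have h2 := (hasDerivAt_const t x').dot3 (hy.cross3 hC)
  have hN := hasDerivAt_norm3 hx hx0
  have h3 := ((hasDerivAt_const t m).div hN hn.ne').mul ((hasDerivAt_const t x').dot3 hx)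
  have hR := hasDerivAt_norm3 hsub hx1'
  have h4 := (((hasDerivAt_const t m).mul (hsub.dot3 (hasDerivAt_const t x'))).div hR hr.ne').const_mul ε
  have H := ((h1.sub h2).add h3).add h4
  have hfun : (fun s => G0 x' m (x s) (y s) + ε * G1 x' m (x s)) =
      (fun s => (x s ⨯₃ y s) ⬝ᵥ (x s ⨯₃ y s) - x' ⬝ᵥ (y s ⨯₃ (x s ⨯₃ y s))
        + (m / norm3 (x s)) * (x' ⬝ᵥ x s)
        + ε * (m * ((x' - x s) ⬝ᵥ x') / norm3 (x' - x s))) := by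
    funext s; exact Gexp x' m ε (x s) (y s)
  rw [hfun]
  refine H.congr_deriv ?_
  have hn2 : norm3 a ^ 2 = a ⬝ᵥ a := norm3_sq a
  have hr2 : norm3 (x' - a) ^ 2 = (x' - a) ⬝ᵥ (x' - a) := norm3_sq (x' - a)
  rw [hb']
  simp only [← ha, ← hb, cross_apply, dotProduct, Fin.sum_univ_three, Pi.smul_apply,
    smul_eq_mul, Pi.add_apply, Pi.sub_apply, Pi.neg_apply, Pi.zero_apply,
    Matrix.cons_val_zero, Matrix.cons_val_one, Matrix.head_cons, Matrix.cons_val_two,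
    Matrix.tail_cons, Pi.div_apply, Pi.mul_apply] at *
  have hn' := hn.ne'
  have hr' := hr.ne'
  linear_combination (norm := skip)
    ((x' 0 * b 0 + x' 1 * b 1 + x' 2 * b 2) / norm3 a ^ 3) * hn2
      - (ε * (x' 0 * b 0 + x' 1 * b 1 + x' 2 * b 2) / norm3 (x' - a) ^ 3) * hr2
  field_simp
  ring


/-- the Euler integral `𝒢 = 𝒢₀ + ε 𝒢₁` of the two-centre problem with
centres at `0` and `x'` is conserved along solutions of the Hamiltonian system of
`h(y,x) = |y|²/(2m) − 1/|x| − ε/|x'−x|`, i.e. `ẋ = y/m`,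
`ẏ = −x/|x|³ + ε (x'−x)/|x'−x|³`. -/
theorem euler_integral_conserved (x' : Fin 3 → ℝ) (hx' : x' ≠ 0) (m ε : ℝ) (hm : 0 < m)
    (x y : ℝ → Fin 3 → ℝ)
    (hcol : ∀ t, x t ≠ 0 ∧ x t ≠ x')
    (hx : ∀ t, HasDerivAt x (m⁻¹ • y t) t)
    (hy : ∀ t, HasDerivAt y
      (-((norm3 (x t) ^ 3)⁻¹ • x t)
        + (ε / norm3 (x' - x t) ^ 3) • (x' - x t)) t) :
    ∀ s t : ℝ,
      G0 x' m (x s) (y s) + ε * G1 x' m (x s) = G0 x' m (x t) (y t) + ε * G1 x' m (x t) := by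
  have hkey : ∀ u : ℝ, HasDerivAt (fun s => G0 x' m (x s) (y s) + ε * G1 x' m (x s)) 0 u :=
    fun u => euler_key x' m ε hm.ne' x y u (hcol u).1 (hcol u).2 (hx u) (hy u)
  intro s t
  exact is_const_of_deriv_eq_zero (fun u => (hkey u).differentiableAt)
    (fun u => (hkey u).deriv) s t
end

section
/- The total angular momentum is a first integral of the enlarged two-centre system: let m > 0, ε ∈ ℝ, and let x, y, x', y' : ℝ → ℝ³ be differentiable with x(t) ∉ {0, x'(t)} for all t, satisfying ẋ = y/m, ẏ = −x/|x|³ + ε·(x' − x)/|x' − x|³, ẋ' = 0, and ẏ' = −ε·(x' − x)/|x' − x|³. Then the vector-valued function t ↦ x(t) × y(t) + x'(t) × y'(t) is constant. -/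
open scoped Matrix

lemma cross_hasDerivAt {u v : ℝ → Fin 3 → ℝ} {u' v' : Fin 3 → ℝ} {t : ℝ}
    (hu : HasDerivAt u u' t) (hv : HasDerivAt v v' t) :
    HasDerivAt (fun s => u s ⨯₃ v s) (u' ⨯₃ v t + u t ⨯₃ v') t := by
  have hu' := fun i => (hasDerivAt_pi.mp hu) i
  have hv' := fun i => (hasDerivAt_pi.mp hv) i
  rw [hasDerivAt_pi]
  intro i
  fin_cases i <;>
    simp [crossProduct] <;>
  · convert ((hu' _).mul (hv' _)).sub ((hu' _).mul (hv' _)) using 1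
    · rfl
    ring

/-- the total angular momentum `C_t = x × y + x' × y'` is a first
integral of the enlarged two-centre system, i.e. the Hamiltonian system of
`h(y', y, x', x) = |y|²/(2m) − 1/|x| − ε/|x'−x|` regarded as a function constant
in `y'`: `ẋ = y/m`, `ẏ = −x/|x|³ + ε (x'−x)/|x'−x|³`, `ẋ' = 0`,
`ẏ' = −ε (x'−x)/|x'−x|³`. -/
theorem total_angular_momentum_conserved (m ε : ℝ) (hm : 0 < m)
    (x y x' y' : ℝ → Fin 3 → ℝ)
    (hcol : ∀ t, x t ≠ 0 ∧ x t ≠ x' t)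
    (hx : ∀ t, HasDerivAt x (m⁻¹ • y t) t)
    (hy : ∀ t, HasDerivAt y
      (-((norm3 (x t) ^ 3)⁻¹ • x t)
        + (ε / norm3 (x' t - x t) ^ 3) • (x' t - x t)) t)
    (hx' : ∀ t, HasDerivAt x' (0 : Fin 3 → ℝ) t)
    (hy' : ∀ t, HasDerivAt y'
      (-((ε / norm3 (x' t - x t) ^ 3) • (x' t - x t))) t) :
    ∀ s t : ℝ,
      x s ⨯₃ y s + x' s ⨯₃ y' s = x t ⨯₃ y t + x' t ⨯₃ y' t := by
  set f : ℝ → Fin 3 → ℝ := fun t => x t ⨯₃ y t + x' t ⨯₃ y' t with hf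
  have key : ∀ t, HasDerivAt f (0 : Fin 3 → ℝ) t := by
    intro t
    have h1 := cross_hasDerivAt (hx t) (hy t)
    have h2 := cross_hasDerivAt (hx' t) (hy' t)
    have h3 := h1.add h2
    refine h3.congr_deriv ?_
    funext i
    fin_cases i <;>
      simp [crossProduct] <;>
      ring
  have hd : ∀ t, fderiv ℝ f t = 0 := by
    intro t
    rw [(key t).hasFDerivAt.fderiv]
    ext v
    simp
  intro s t
  exact is_const_of_fderiv_eq_zero (fun t => (key t).differentiableAt) hd s t
end
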